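/- Let k ≥ 1, let a, b ∈ ℤ^k, and let Ω be the k×(k+2) integer matrix whose first k columns form the k×k identity matrix, whose (k+1)-st column is a, and whose (k+2)-nd column is b. Then Ω is admissible if and only if: every a_i and every b_i is nonzero; gcd(a_i, b_i) = 1 for each i = 1,…,k; and for all i ≠ j it is not the case that both a_i = a_j and b_i = b_j, and not the case that both a_i = −a_j and b_i = −b_j. -/

import Mathlib

/-- The `k × k` minor of a `k × n` integer matrix `Ω` on the set `s` of column indices
(taken in increasing order); junk value `0` if `s` does not have exactly `k` elements. -/
def minorOn {k n : ℕ} (Ω : Matrix (Fin k) (Fin n) ℤ) (s : Finset (Fin n)) : ℤ :=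
  if h : s.card = k then (Ω.submatrix id (s.orderEmbOfFin h)).det else 0

/-- A weight matrix is non-degenerate if all of its `k × k` minors are nonzero. -/
def NonDegenerate {k n : ℕ} (Ω : Matrix (Fin k) (Fin n) ℤ) : Prop :=
  ∀ s : Finset (Fin n), s.card = k → minorOn Ω s ≠ 0

/-- The gcd `d` of all `k × k` minors of `Ω`. -/
def minorGcd {k n : ℕ} (Ω : Matrix (Fin k) (Fin n) ℤ) : ℤ :=
  ((Finset.univ : Finset (Fin n)).powersetCard k).gcd (minorOn Ω)

/-- A non-degenerate weight matrix `Ω` is admissible if for every `(k+1)`-element set `A`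
of column indices, the gcd of the `k × k` minors of `Ω` on the `k`-element subsets of `A`
equals the gcd `d` of all `k × k` minors of `Ω`. -/
def Admissible {k n : ℕ} (Ω : Matrix (Fin k) (Fin n) ℤ) : Prop :=
  NonDegenerate Ω ∧
    ∀ A : Finset (Fin n), A.card = k + 1 →
      (A.powersetCard k).gcd (minorOn Ω) = minorGcd Ω

/-- The `k × (k+2)` weight matrix whose first `k` columns form the identity,
whose `(k+1)`-st column is `a`, and whose `(k+2)`-nd column is `b`. -/
def weightMatrix {k : ℕ} (a b : Fin k → ℤ) : Matrix (Fin k) (Fin (k+2)) ℤ :=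
  Matrix.of fun i j =>
    if (j : ℕ) < k then (if (i : ℕ) = (j : ℕ) then 1 else 0)
    else if (j : ℕ) = k then a i else b i

open Matrix Finset

namespace WMaux


lemma assoc_det_submatrix {k n : ℕ} (Ω : Matrix (Fin k) (Fin n) ℤ)
    (f g : Fin k → Fin n) (hf : Function.Injective f) (hg : Function.Injective g)
    (h : Set.range f = Set.range g) :
    Associated ((Ω.submatrix id f).det) ((Ω.submatrix id g).det) := by
  let σ : Equiv.Perm (Fin k) :=
    (Equiv.ofInjective g hg).trans ((Equiv.setCongr h.symm).trans (Equiv.ofInjective f hf).symm)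
  have hfs : ∀ x, f (σ x) = g x := by
    intro x
    simp [σ, Equiv.apply_ofInjective_symm]
  have hsub : Ω.submatrix id g = (Ω.submatrix id f).submatrix id σ := by
    ext r c
    simp [Matrix.submatrix_apply, hfs]
  refine ⟨(Equiv.Perm.sign σ : ℤˣ), ?_⟩
  rw [hsub, Matrix.det_permute', mul_comm]
  norm_cast

lemma minorOn_assoc {k n : ℕ} (Ω : Matrix (Fin k) (Fin n) ℤ) {s : Finset (Fin n)}
    (h : s.card = k) (g : Fin k → Fin n) (hg : Function.Injective g)
    (hmem : ∀ j, g j ∈ s) :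
    Associated (minorOn Ω s) ((Ω.submatrix id g).det) := by
  rw [minorOn, dif_pos h]
  refine assoc_det_submatrix Ω _ g (s.orderEmbOfFin h).injective hg ?_
  rw [Finset.range_orderEmbOfFin]
  have himg : Finset.image g Finset.univ = s := by
    apply Finset.eq_of_subset_of_card_le
    · intro x hx
      rcases Finset.mem_image.mp hx with ⟨j, _, rfl⟩
      exact hmem j
    · rw [h, Finset.card_image_of_injective _ hg, Finset.card_univ, Fintype.card_fin]
  rw [← himg, Finset.coe_image, Finset.coe_univ, Set.image_univ]

variable {k : ℕ}

lemma det_one_updCol (i : Fin k) (v : Fin k → ℤ) :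
    ((1 : Matrix (Fin k) (Fin k) ℤ).updateCol i v).det = v i := by
  have h := Matrix.cramer_apply (1 : Matrix (Fin k) (Fin k) ℤ) v i
  rw [Matrix.cramer_one] at h
  exact h.symm

lemma det_one_updCol_two {i j : Fin k} (hij : i ≠ j) (u v : Fin k → ℤ) :
    (((1 : Matrix (Fin k) (Fin k) ℤ).updateCol i u).updateCol j v).det
      = u i * v j - u j * v i := by
  set N := (1 : Matrix (Fin k) (Fin k) ℤ).updateCol i u with hN
  set f1 : Fin k → ℤ := fun r => if r = i then v i else 0 with hf1
  set f2 : Fin k → ℤ := fun r => if r = i then 0 else v r with hf2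
  have hsplit : v = f1 + f2 := by
    funext r; by_cases hr : r = i <;> simp [f1, f2, hr]
  have hterm1 : (N.updateCol j f1).det = v i * (- u j) := by
    have h1 : f1 = v i • Pi.single i 1 := by
      funext r; by_cases hr : r = i <;> simp [f1, hr, Pi.single_apply]
    rw [h1, Matrix.det_updateCol_smul]
    have hswap : ((1 : Matrix (Fin k) (Fin k) ℤ).updateCol j u)
        = (N.updateCol j (Pi.single i 1)).submatrix id (Equiv.swap i j) := by
      ext r c
      rcases eq_or_ne c i with rfl | hci
      · simp [Matrix.submatrix_apply, Equiv.swap_apply_left, Matrix.updateCol_apply,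
          hij, N, Pi.single_apply, Matrix.one_apply]
      · rcases eq_or_ne c j with rfl | hcj
        · simp [Matrix.submatrix_apply, Equiv.swap_apply_right, Matrix.updateCol_apply,
            hij.symm, hij, N]
        · simp [Matrix.submatrix_apply, Equiv.swap_apply_of_ne_of_ne hci hcj,
            Matrix.updateCol_apply, hci, hcj, N, Matrix.one_apply]
    have h2 := congrArg Matrix.det hswap
    rw [Matrix.det_permute', Equiv.Perm.sign_swap hij, det_one_updCol] at h2
    have hdet : (N.updateCol j (Pi.single i 1)).det = - u j := by
      simp only [Units.val_neg, Units.val_one, Int.cast_neg, Int.cast_one, neg_one_mul] at h2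
      omega
    simp only [hdet, smul_eq_mul]
  have hterm2 : (N.updateCol j f2).det = v j * u i := by
    have key : (fun r => ∑ l, f2 l • N r l) = f2 := by
      funext r
      rw [Finset.sum_eq_single r]
      · rcases eq_or_ne r i with rfl | hri
        · simp [f2, N, Matrix.updateCol_apply]
        · simp [f2, N, Matrix.updateCol_apply, hri, Matrix.one_apply]
      · intro l _ hlr
        rcases eq_or_ne l i with rfl | hli
        · simp [f2]
        · simp [N, Matrix.updateCol_apply, hli, Matrix.one_apply, hlr, hlr.symm]
      · intro hr; exact absurd (Finset.mem_univ r) hr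
    have h3 := Matrix.det_updateCol_sum N j f2
    rw [show (fun r => ∑ l, f2 l • N r l) = f2 from key] at h3
    rw [h3, det_one_updCol, smul_eq_mul]
    simp [f2, hij.symm]
  have hv : N.updateCol j v = N.updateCol j (f1 + f2) := by rw [← hsplit]
  rw [hv, Matrix.det_updateCol_add, hterm1, hterm2]
  have : f2 ≠ v → True := fun _ => trivial
  have hvi : f1 i = v i := by simp [f1]
  ring


variable {k : ℕ}

def ca (k : ℕ) : Fin (k+2) := ⟨k, by omega⟩
def cb (k : ℕ) : Fin (k+2) := ⟨k+1, by omega⟩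
def eCol (i : Fin k) : Fin (k+2) := Fin.castAdd 2 i

@[simp] lemma ca_val : (ca k).val = k := rfl
@[simp] lemma cb_val : (cb k).val = k + 1 := rfl
@[simp] lemma eCol_val (i : Fin k) : (eCol i).val = i.val := rfl

lemma eCol_injective : Function.Injective (eCol (k := k)) := by
  intro x y h
  have : (eCol x).val = (eCol y).val := by rw [h]
  simpa [Fin.ext_iff] using this

lemma eCol_ne_ca (i : Fin k) : eCol i ≠ ca k := by
  have := i.isLt; simp [Fin.ext_iff]; omega

lemma eCol_ne_cb (i : Fin k) : eCol i ≠ cb k := by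
  have := i.isLt; simp [Fin.ext_iff]; omega

lemma ca_ne_cb : ca k ≠ cb k := by simp [Fin.ext_iff]

variable (a b : Fin k → ℤ)

lemma wm_eCol (r : Fin k) (j : Fin k) :
    weightMatrix a b r (eCol j) = if r = j then 1 else 0 := by
  have := j.isLt
  simp [weightMatrix, eCol, this, Fin.ext_iff]

lemma wm_ca (r : Fin k) : weightMatrix a b r (ca k) = a r := by
  simp [weightMatrix, ca]

lemma wm_cb (r : Fin k) : weightMatrix a b r (cb k) = b r := by
  simp [weightMatrix, cb]

def gA (i : Fin k) : Fin k → Fin (k+2) := fun j => if j = i then ca k else eCol j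
def gB (i : Fin k) : Fin k → Fin (k+2) := fun j => if j = i then cb k else eCol j
def gAB (i j : Fin k) : Fin k → Fin (k+2) :=
  fun l => if l = i then ca k else if l = j then cb k else eCol l

lemma gA_injective (i : Fin k) : Function.Injective (gA i) := by
  intro x y h
  unfold gA at h
  split_ifs at h with hx hy hy
  · rw [hx, hy]
  · exact absurd h.symm (eCol_ne_ca y)
  · exact absurd h (eCol_ne_ca x)
  · exact eCol_injective h

lemma gB_injective (i : Fin k) : Function.Injective (gB i) := by
  intro x y h
  unfold gB at h
  split_ifs at h with hx hy hy
  · rw [hx, hy]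
  · exact absurd h.symm (eCol_ne_cb y)
  · exact absurd h (eCol_ne_cb x)
  · exact eCol_injective h

lemma gAB_injective {i j : Fin k} (hij : i ≠ j) : Function.Injective (gAB i j) := by
  intro x y h
  unfold gAB at h
  split_ifs at h with h1 h2 h3 h4 h5 h6 h7 h8 <;>
    first
      | (subst_vars; rfl)
      | exact absurd h ca_ne_cb
      | exact absurd h.symm ca_ne_cb
      | exact absurd h (eCol_ne_ca _)
      | exact absurd h.symm (eCol_ne_ca _)
      | exact absurd h (eCol_ne_cb _)
      | exact absurd h.symm (eCol_ne_cb _)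
      | exact eCol_injective h

lemma submatrix_e : (weightMatrix a b).submatrix id (eCol (k := k)) = 1 := by
  ext r c
  rw [Matrix.submatrix_apply, id_eq, wm_eCol, Matrix.one_apply]

lemma submatrix_gA (i : Fin k) :
    (weightMatrix a b).submatrix id (gA i) = (1 : Matrix (Fin k) (Fin k) ℤ).updateCol i a := by
  ext r c
  rw [Matrix.submatrix_apply, id_eq, Matrix.updateCol_apply]
  by_cases hc : c = i
  · simp [gA, hc, wm_ca]
  · simp [gA, hc, wm_eCol, Matrix.one_apply]

lemma submatrix_gB (i : Fin k) :
    (weightMatrix a b).submatrix id (gB i) = (1 : Matrix (Fin k) (Fin k) ℤ).updateCol i b := by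
  ext r c
  rw [Matrix.submatrix_apply, id_eq, Matrix.updateCol_apply]
  by_cases hc : c = i
  · simp [gB, hc, wm_cb]
  · simp [gB, hc, wm_eCol, Matrix.one_apply]

lemma submatrix_gAB {i j : Fin k} (hij : i ≠ j) :
    (weightMatrix a b).submatrix id (gAB i j)
      = ((1 : Matrix (Fin k) (Fin k) ℤ).updateCol i a).updateCol j b := by
  ext r c
  rw [Matrix.submatrix_apply, id_eq, Matrix.updateCol_apply, Matrix.updateCol_apply]
  unfold gAB
  split_ifs with h1 h2
  · exact absurd (h1.symm.trans h2) hij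
  · exact wm_ca a b r
  · exact wm_cb a b r
  · rw [wm_eCol, Matrix.one_apply]


lemma card_pair_compl {p q : Fin (k+2)} (h : p ≠ q) :
    ({p, q}ᶜ : Finset (Fin (k+2))).card = k := by
  rw [Finset.card_compl, Finset.card_pair h, Fintype.card_fin]
  omega

lemma mem_compl_pair {x p q : Fin (k+2)} :
    x ∈ ({p, q}ᶜ : Finset (Fin (k+2))) ↔ x ≠ p ∧ x ≠ q := by
  simp [Finset.mem_compl, not_or]

lemma assoc_ne_zero {m v : ℤ} (h : Associated m v) (hv : v ≠ 0) : m ≠ 0 := by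
  intro h0
  rw [h0] at h
  exact hv ((associated_zero_iff_eq_zero v).mp h.symm)

lemma FId : Associated (minorOn (weightMatrix a b) ({ca k, cb k}ᶜ)) 1 := by
  have h := minorOn_assoc (weightMatrix a b) (card_pair_compl ca_ne_cb)
      eCol eCol_injective (fun j => mem_compl_pair.mpr ⟨eCol_ne_ca j, eCol_ne_cb j⟩)
  rwa [submatrix_e, Matrix.det_one] at h

lemma FA (i : Fin k) :
    Associated (minorOn (weightMatrix a b) ({eCol i, cb k}ᶜ)) (a i) := by
  have hmem : ∀ j, gA i j ∈ ({eCol i, cb k}ᶜ : Finset (Fin (k+2))) := by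
    intro j
    refine mem_compl_pair.mpr ?_
    by_cases hj : j = i
    · have hgj : gA i j = ca k := by simp [gA, hj]
      rw [hgj]
      exact ⟨(eCol_ne_ca i).symm, ca_ne_cb⟩
    · have hgj : gA i j = eCol j := by simp [gA, hj]
      rw [hgj]
      exact ⟨fun h => hj (eCol_injective h), eCol_ne_cb j⟩
  have h := minorOn_assoc (weightMatrix a b) (card_pair_compl (eCol_ne_cb i))
      (gA i) (gA_injective i) hmem
  rwa [submatrix_gA, det_one_updCol] at h

lemma FB (i : Fin k) :
    Associated (minorOn (weightMatrix a b) ({eCol i, ca k}ᶜ)) (b i) := by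
  have hmem : ∀ j, gB i j ∈ ({eCol i, ca k}ᶜ : Finset (Fin (k+2))) := by
    intro j
    refine mem_compl_pair.mpr ?_
    by_cases hj : j = i
    · have hgj : gB i j = cb k := by simp [gB, hj]
      rw [hgj]
      exact ⟨(eCol_ne_cb i).symm, ca_ne_cb.symm⟩
    · have hgj : gB i j = eCol j := by simp [gB, hj]
      rw [hgj]
      exact ⟨fun h => hj (eCol_injective h), eCol_ne_ca j⟩
  have h := minorOn_assoc (weightMatrix a b) (card_pair_compl (eCol_ne_ca i))
      (gB i) (gB_injective i) hmem
  rwa [submatrix_gB, det_one_updCol] at h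

lemma FAB {i j : Fin k} (hij : i ≠ j) :
    Associated (minorOn (weightMatrix a b) ({eCol i, eCol j}ᶜ))
      (a i * b j - a j * b i) := by
  have hne : eCol i ≠ eCol j := fun h => hij (eCol_injective h)
  have hmem : ∀ l, gAB i j l ∈ ({eCol i, eCol j}ᶜ : Finset (Fin (k+2))) := by
    intro l
    refine mem_compl_pair.mpr ?_
    by_cases hl1 : l = i
    · have hgl : gAB i j l = ca k := by simp [gAB, hl1]
      rw [hgl]
      exact ⟨(eCol_ne_ca i).symm, (eCol_ne_ca j).symm⟩
    · by_cases hl2 : l = j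
      · have hgl : gAB i j l = cb k := by simp [gAB, hl1, hl2, Ne.symm hij]
        rw [hgl]
        exact ⟨(eCol_ne_cb i).symm, (eCol_ne_cb j).symm⟩
      · have hgl : gAB i j l = eCol l := by simp [gAB, hl1, hl2]
        rw [hgl]
        exact ⟨fun h => hl1 (eCol_injective h), fun h => hl2 (eCol_injective h)⟩
  have h := minorOn_assoc (weightMatrix a b) (card_pair_compl hne)
      (gAB i j) (gAB_injective hij) hmem
  rwa [submatrix_gAB a b hij, det_one_updCol_two hij] at h

lemma exists_pair_compl {s : Finset (Fin (k+2))} (h : s.card = k) :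
    ∃ p q, p ≠ q ∧ s = ({p, q}ᶜ : Finset (Fin (k+2))) := by
  have hc : (sᶜ).card = 2 := by
    rw [Finset.card_compl, h, Fintype.card_fin]; omega
  obtain ⟨p, q, hpq, hs⟩ := Finset.card_eq_two.mp hc
  exact ⟨p, q, hpq, by rw [← compl_compl s, hs]⟩

lemma exists_singleton_compl {A : Finset (Fin (k+2))} (h : A.card = k + 1) :
    ∃ p, A = ({p}ᶜ : Finset (Fin (k+2))) := by
  have hc : (Aᶜ).card = 1 := by
    rw [Finset.card_compl, h, Fintype.card_fin]; omega
  obtain ⟨p, hp⟩ := Finset.card_eq_one.mp hc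
  exact ⟨p, by rw [← compl_compl A, hp]⟩

lemma col_cases (r : Fin (k+2)) : (∃ i : Fin k, r = eCol i) ∨ r = ca k ∨ r = cb k := by
  rcases lt_or_ge r.val k with h | h
  · exact Or.inl ⟨⟨r.val, h⟩, by simp [Fin.ext_iff, eCol]⟩
  · have h2 := r.isLt
    rcases eq_or_lt_of_le h with h1 | h1
    · exact Or.inr (Or.inl (by simp [Fin.ext_iff, ca]; omega))
    · exact Or.inr (Or.inr (by simp [Fin.ext_iff, cb]; omega))

lemma gcd_eq_one_of_isUnit {β : Type*} {s : Finset β} {f : β → ℤ}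
    (h : IsUnit (s.gcd f)) : s.gcd f = 1 := by
  rcases Int.isUnit_iff.mp h with h1 | h1
  · exact h1
  · have hn := Finset.normalize_gcd (s := s) (f := f)
    rw [h1, ← Int.abs_eq_normalize] at hn
    norm_num at hn

lemma gcd_one_of_mem_unit {β : Type*} {s : Finset β} {f : β → ℤ} {x : β}
    (hx : x ∈ s) (h : IsUnit (f x)) : s.gcd f = 1 :=
  gcd_eq_one_of_isUnit (isUnit_of_dvd_unit (Finset.gcd_dvd hx) h)

lemma cross_ne {x y x' y' : ℤ} (hx : x ≠ 0) (hx' : x' ≠ 0)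
    (h1 : IsCoprime x y) (h2 : IsCoprime x' y')
    (hne1 : ¬(x = x' ∧ y = y')) (hne2 : ¬(x = -x' ∧ y = -y')) :
    x * y' - x' * y ≠ 0 := by
  intro h0
  have he : x * y' = x' * y := by linarith
  have d1 : x ∣ x' := h1.dvd_of_dvd_mul_right ⟨y', he.symm⟩
  have d2 : x' ∣ x := h2.dvd_of_dvd_mul_right ⟨y, he⟩
  rcases Int.associated_iff.mp (associated_of_dvd_dvd d1 d2) with hxx | hxx
  · rw [← hxx] at he
    exact hne1 ⟨hxx, (mul_left_cancel₀ hx he).symm⟩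
  · refine hne2 ⟨hxx, ?_⟩
    rw [hxx] at he
    have hsum : x' * (y + y') = 0 := by ring_nf; ring_nf at he; linarith
    rcases mul_eq_zero.mp hsum with h | h
    · exact absurd h hx'
    · omega

lemma mem_ps_compl_singleton {p : Fin (k+2)} {s : Finset (Fin (k+2))} :
    s ∈ ({p}ᶜ : Finset (Fin (k+2))).powersetCard k ↔
      ∃ q, q ≠ p ∧ s = ({p, q}ᶜ : Finset (Fin (k+2))) := by
  constructor
  · intro hs
    obtain ⟨hsub, hcard⟩ := Finset.mem_powersetCard.mp hs
    have hps : p ∈ sᶜ := by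
      refine Finset.mem_compl.mpr fun hp => ?_
      have := hsub hp
      simp at this
    have hc : (sᶜ).card = 2 := by
      rw [Finset.card_compl, hcard, Fintype.card_fin]; omega
    obtain ⟨x, y, hxy, hs2⟩ := Finset.card_eq_two.mp hc
    rw [hs2] at hps
    rcases Finset.mem_insert.mp hps with rfl | hpy
    · exact ⟨y, hxy.symm, by rw [← compl_compl s, hs2]⟩
    · have hpy' : p = y := Finset.mem_singleton.mp hpy
      subst hpy'
      exact ⟨x, hxy, by rw [← compl_compl s, hs2, Finset.pair_comm]⟩
  · rintro ⟨q, hq, rfl⟩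
    refine Finset.mem_powersetCard.mpr ⟨?_, card_pair_compl (Ne.symm hq)⟩
    apply Finset.compl_subset_compl.mpr
    intro x hx
    rw [Finset.mem_singleton.mp hx]
    exact Finset.mem_insert_self p {q}

lemma minorGcd_eq_one : minorGcd (weightMatrix a b) = 1 := by
  refine gcd_one_of_mem_unit (x := ({ca k, cb k}ᶜ : Finset (Fin (k+2)))) ?_ ?_
  · exact Finset.mem_powersetCard.mpr ⟨Finset.subset_univ _, card_pair_compl ca_ne_cb⟩
  · exact associated_one_iff_isUnit.mp (FId a b)

end WMaux

open WMaux in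
theorem stmt1 {k : ℕ} (hk : 1 ≤ k) (a b : Fin k → ℤ) :
    Admissible (weightMatrix a b) ↔
      ((∀ i, a i ≠ 0) ∧ (∀ i, b i ≠ 0) ∧ (∀ i, Int.gcd (a i) (b i) = 1) ∧
        ∀ i j, i ≠ j → ¬(a i = a j ∧ b i = b j) ∧ ¬(a i = -a j ∧ b i = -b j)) := by
  constructor
  · rintro ⟨hnd, hadm⟩
    refine ⟨?_, ?_, ?_, ?_⟩
    · intro i
      exact fun h0 => hnd _ (card_pair_compl (eCol_ne_cb i))
        ((associated_zero_iff_eq_zero _).mp (h0 ▸ FA a b i))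
    · intro i
      exact fun h0 => hnd _ (card_pair_compl (eCol_ne_ca i))
        ((associated_zero_iff_eq_zero _).mp (h0 ▸ FB a b i))
    · intro i
      have hA := hadm ({eCol i}ᶜ) (by rw [Finset.card_compl, Finset.card_singleton, Fintype.card_fin]; omega)
      rw [minorGcd_eq_one] at hA
      set g : ℤ := (Int.gcd (a i) (b i) : ℤ) with hg
      have hdvd : g ∣ (({eCol i}ᶜ : Finset (Fin (k+2))).powersetCard k).gcd
          (minorOn (weightMatrix a b)) := by
        refine Finset.dvd_gcd fun s hs => ?_
        obtain ⟨q, hqp, rfl⟩ := mem_ps_compl_singleton.mp hs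
        rcases col_cases q with ⟨j, rfl⟩ | rfl | rfl
        · have hij : i ≠ j := fun h => hqp (by rw [h])
          refine dvd_trans ?_ (FAB a b hij).symm.dvd
          exact dvd_sub (Dvd.dvd.mul_right (Int.gcd_dvd_left _ _) _)
            (Dvd.dvd.mul_left (Int.gcd_dvd_right _ _) _)
        · exact dvd_trans (Int.gcd_dvd_right _ _) (FB a b i).symm.dvd
        · exact dvd_trans (Int.gcd_dvd_left _ _) (FA a b i).symm.dvd
      rw [hA] at hdvd
      have := Int.isUnit_iff.mp (isUnit_of_dvd_one hdvd)
      omega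
    · intro i j hij
      have hcross := hnd _ (card_pair_compl (fun h => hij (eCol_injective h) : eCol i ≠ eCol j))
      have h := FAB a b hij
      constructor
      · rintro ⟨h1, h2⟩
        apply hcross
        apply (associated_zero_iff_eq_zero _).mp
        rw [show a i * b j - a j * b i = 0 by rw [h1, h2]; ring] at h
        exact h
      · rintro ⟨h1, h2⟩
        apply hcross
        apply (associated_zero_iff_eq_zero _).mp
        rw [show a i * b j - a j * b i = 0 by rw [h1, h2]; ring] at h
        exact h
  · rintro ⟨ha, hb, hcop, hpair⟩
    have hcop' : ∀ i, IsCoprime (a i) (b i) := fun i =>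
      Int.isCoprime_iff_gcd_eq_one.mpr (hcop i)
    have hnd : NonDegenerate (weightMatrix a b) := by
      intro s hs
      obtain ⟨p, q, hpq, rfl⟩ := exists_pair_compl hs
      have hcr : ∀ (i j : Fin k), i ≠ j → a i * b j - a j * b i ≠ 0 := by
        intro i j hij
        exact cross_ne (ha i) (ha j) (hcop' i) (hcop' j)
          (hpair i j hij).1 (hpair i j hij).2
      rcases col_cases p with ⟨i, rfl⟩ | rfl | rfl <;>
        rcases col_cases q with ⟨j, rfl⟩ | rfl | rfl
      · have hij : i ≠ j := fun h => hpq (by rw [h])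
        exact assoc_ne_zero (FAB a b hij) (hcr i j hij)
      · exact assoc_ne_zero (FB a b i) (hb i)
      · exact assoc_ne_zero (FA a b i) (ha i)
      · rw [Finset.pair_comm]
        exact assoc_ne_zero (FB a b j) (hb j)
      · exact absurd rfl hpq
      · exact assoc_ne_zero (FId a b) one_ne_zero
      · rw [Finset.pair_comm]
        exact assoc_ne_zero (FA a b j) (ha j)
      · rw [Finset.pair_comm]
        exact assoc_ne_zero (FId a b) one_ne_zero
      · exact absurd rfl hpq
    refine ⟨hnd, ?_⟩
    intro A hA
    rw [minorGcd_eq_one]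
    obtain ⟨p, rfl⟩ := exists_singleton_compl hA
    rcases col_cases p with ⟨i, rfl⟩ | rfl | rfl
    · apply gcd_eq_one_of_isUnit
      have hd1 : _ ∣ a i := (Finset.gcd_dvd
        (mem_ps_compl_singleton.mpr ⟨cb k, (eCol_ne_cb i).symm, rfl⟩)).trans (FA a b i).dvd
      have hd2 : _ ∣ b i := (Finset.gcd_dvd
        (mem_ps_compl_singleton.mpr ⟨ca k, (eCol_ne_ca i).symm, rfl⟩)).trans (FB a b i).dvd
      exact (hcop' i).isUnit_of_dvd' hd1 hd2
    · refine gcd_one_of_mem_unit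
        (mem_ps_compl_singleton.mpr ⟨cb k, ca_ne_cb.symm, rfl⟩) ?_
      exact associated_one_iff_isUnit.mp (FId a b)
    · refine gcd_one_of_mem_unit
        (mem_ps_compl_singleton.mpr ⟨ca k, ca_ne_cb, by rw [Finset.pair_comm]⟩) ?_
      exact associated_one_iff_isUnit.mp (FId a b)
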